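/- Let a, b, 0, 1 be glues with a ≠ b and 0 ≠ 1, and consider the three tile types A = (a, 0, a, 0), B = (a, 0, b, 1), C = (b, 1, a, 0) (glues listed in order N, W, S, E). In any column assembly f : Fin n → {A, B, C} (satisfying f(y+1).S = f(y).N), the sequence of east glues never contains two consecutive 1's: if f(y).E = 1 and y+1 < n, then f(y+1).E = 0. -/
import Mathlib


structure Tile (G : Type*) where
  N : G
  W : G
  S : G
  E : G

/-- For A = (a,0,a,0), B = (a,0,b,1), C = (b,1,a,0), the sequence of east glues
of a column assembly never contains two consecutive 1's. -/
theorem no_two_consecutive_east_ones {G : Type*} (a b z o : G)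
    (hab : a ≠ b) (hzo : z ≠ o) (A B C : Tile G)
    (hA : A = ⟨a, z, a, z⟩) (hB : B = ⟨a, z, b, o⟩) (hC : C = ⟨b, o, a, z⟩)
    (n : ℕ) (f : Fin n → Tile G)
    (hmem : ∀ y, f y = A ∨ f y = B ∨ f y = C)
    (hcol : ∀ (y : ℕ) (hy : y + 1 < n),
      (f ⟨y + 1, hy⟩).S = (f ⟨y, Nat.lt_of_succ_lt hy⟩).N) :
    ∀ (y : ℕ) (hy : y + 1 < n),
      (f ⟨y, Nat.lt_of_succ_lt hy⟩).E = o → (f ⟨y + 1, hy⟩).E = z := by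
  intro y hy hE
  subst hA hB hC
  have hN : (f ⟨y, Nat.lt_of_succ_lt hy⟩).N = a := by
    rcases hmem ⟨y, Nat.lt_of_succ_lt hy⟩ with h | h | h <;> rw [h] at hE ⊢ <;>
      first | rfl | exact absurd hE hzo
  have hS := hcol y hy
  rw [hN] at hS
  rcases hmem ⟨y + 1, hy⟩ with h | h | h <;> rw [h] at hS ⊢ <;>
    first | rfl | exact absurd hS.symm hab
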